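/- For t ∈ ℝ define the 2×2 complex matrices X_t := cos t · [[cos t, sin t],[sin t, −cos t]] and Y_t := cos t · [[cos t, −sin t],[−sin t, −cos t]]. Then the decoupled NC parallel sums are unbounded on the NC bidisk along this path: for every M > 0 there exists t ∈ (0, π/2) such that ‖X_t‖ < 1, ‖Y_t‖ < 1, the matrix 2I − X_t − Y_t is invertible, and both ‖(2I − X_t − Y_t)⁻¹ (I − X_t)(I − Y_t)‖ > M and ‖(I − X_t)(I − Y_t)(2I − X_t − Y_t)⁻¹‖ > M. -/

import Mathlib

/-- The ℓ²→ℓ² operator norm of a square complex matrix. -/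
noncomputable def opNorm {m : Type*} [Fintype m] [DecidableEq m] (M : Matrix m m ℂ) : ℝ :=
  ‖Matrix.toEuclideanCLM (𝕜 := ℂ) M‖

lemma entry_le_opNorm {n : Type*} [Fintype n] [DecidableEq n] (M : Matrix n n ℂ) (i j : n) :
    ‖M i j‖ ≤ opNorm M := by
  set A := Matrix.toEuclideanCLM (𝕜 := ℂ) M with hA
  have hx : A (EuclideanSpace.single j (1:ℂ)) =
      (WithLp.equiv 2 _).symm (M.mulVec (Pi.single j 1)) := by
    rw [hA]; rfl
  have h1 : (M i j : ℂ) = inner ℂ (EuclideanSpace.single i (1:ℂ)) (A (EuclideanSpace.single j 1)) := by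
    rw [hx, EuclideanSpace.inner_single_left]
    simp [Matrix.mulVec_single]
  calc ‖M i j‖ = ‖inner (𝕜 := ℂ) (EuclideanSpace.single i (1:ℂ)) (A (EuclideanSpace.single j 1))‖ := by
        rw [← h1]
    _ ≤ ‖EuclideanSpace.single i (1:ℂ)‖ * ‖A (EuclideanSpace.single j 1)‖ := norm_inner_le_norm _ _
    _ = ‖A (EuclideanSpace.single j 1)‖ := by rw [EuclideanSpace.norm_single, norm_one, one_mul]
    _ ≤ ‖A‖ * ‖EuclideanSpace.single j (1:ℂ)‖ := A.le_opNorm _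
    _ = opNorm M := by rw [EuclideanSpace.norm_single, norm_one, mul_one]; rfl

set_option synthInstance.maxHeartbeats 1000000 in
lemma opNorm_lt_one_of_sq {M : Matrix (Fin 2) (Fin 2) ℂ} {c : ℝ} (hc : c^2 < 1)
    (h : star M * M = ((c:ℂ)^2) • 1) : opNorm M < 1 := by
  have key : opNorm M * opNorm M = c^2 := by
    unfold opNorm
    rw [← CStarRing.norm_star_mul_self]
    have h2 : star (Matrix.toEuclideanCLM (𝕜:=ℂ) M) * Matrix.toEuclideanCLM (𝕜:=ℂ) M
        = Matrix.toEuclideanCLM (𝕜:=ℂ) (star M * M) := by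
      rw [map_mul, map_star]
    rw [h2, h, map_smul, map_one]
    rw [norm_smul ((c:ℂ)^2) (1 : EuclideanSpace ℂ (Fin 2) →L[ℂ] EuclideanSpace ℂ (Fin 2))]
    rw [norm_one, mul_one]
    simp [sq_abs]
  nlinarith [norm_nonneg (Matrix.toEuclideanCLM (𝕜:=ℂ) M), sq_nonneg c]

lemma aux_main (M c s : ℝ) (hs0 : 0 < s) (hpy : s^2 + c^2 = 1) (hc2 : c^2 < 1)
    (hMlt : M < c^3 / s) :
    (let Xt : Matrix (Fin 2) (Fin 2) ℂ :=
        ((c : ℝ) : ℂ) • !![((c : ℝ) : ℂ), ((s : ℝ) : ℂ); ((s : ℝ) : ℂ), -((c : ℝ) : ℂ)]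
     let Yt : Matrix (Fin 2) (Fin 2) ℂ :=
        ((c : ℝ) : ℂ) • !![((c : ℝ) : ℂ), -((s : ℝ) : ℂ); -((s : ℝ) : ℂ), -((c : ℝ) : ℂ)]
     opNorm Xt < 1 ∧ opNorm Yt < 1 ∧ IsUnit (2 - Xt - Yt) ∧
        M < opNorm ((2 - Xt - Yt)⁻¹ * ((1 - Xt) * (1 - Yt))) ∧
        M < opNorm ((1 - Xt) * (1 - Yt) * (2 - Xt - Yt)⁻¹)) := by
  intro Xt Yt
  have hpyc : ((s:ℂ))^2 + ((c:ℂ))^2 = 1 := by exact_mod_cast hpy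
  have hsne : (s:ℂ) ≠ 0 := by exact_mod_cast hs0.ne'
  have hXsq : star Xt * Xt = ((c:ℂ)^2) • 1 := by
    ext i j
    fin_cases i <;> fin_cases j <;>
      simp [Xt, Matrix.star_eq_conjTranspose, Matrix.conjTranspose_apply, Matrix.mul_apply,
        Fin.sum_univ_two, Matrix.one_apply, Matrix.smul_apply, smul_eq_mul] <;>
      ring_nf <;> linear_combination ((c:ℂ))^2 * hpyc
  have hYsq : star Yt * Yt = ((c:ℂ)^2) • 1 := by
    ext i j
    fin_cases i <;> fin_cases j <;>
      simp [Yt, Matrix.star_eq_conjTranspose, Matrix.conjTranspose_apply, Matrix.mul_apply,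
        Fin.sum_univ_two, Matrix.one_apply, Matrix.smul_apply, smul_eq_mul] <;>
      ring_nf <;> linear_combination ((c:ℂ))^2 * hpyc
  have hA : (2 - Xt - Yt : Matrix (Fin 2) (Fin 2) ℂ)
      = !![2 - 2*(c:ℂ)^2, 0; 0, 2 + 2*(c:ℂ)^2] := by
    have h2 : (2 : Matrix (Fin 2) (Fin 2) ℂ) = 1 + 1 := by norm_num
    ext i j
    fin_cases i <;> fin_cases j <;>
      simp [h2, Xt, Yt, Matrix.sub_apply, Matrix.add_apply, Matrix.one_apply,
        Matrix.smul_apply, smul_eq_mul] <;> ring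
  have h2s : (2 - 2*(c:ℂ)^2) = 2 * (s:ℂ)^2 := by linear_combination -2 * hpyc
  have hne1 : (2 - 2*(c:ℂ)^2) ≠ 0 := by
    rw [h2s]; exact mul_ne_zero two_ne_zero (pow_ne_zero _ hsne)
  have hne2 : (2 + 2*(c:ℂ)^2) ≠ 0 := by
    intro h
    have hcr : (2 + 2*c^2 : ℝ) = 0 := by exact_mod_cast h
    nlinarith [sq_nonneg c]
  have hInv : (2 - Xt - Yt)⁻¹ = !![(2 - 2*(c:ℂ)^2)⁻¹, 0; 0, (2 + 2*(c:ℂ)^2)⁻¹] := by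
    rw [hA]
    apply Matrix.inv_eq_right_inv
    ext i j
    fin_cases i <;> fin_cases j <;>
      simp [Matrix.mul_apply, Fin.sum_univ_two, Matrix.one_apply, hne1, hne2] <;> field_simp
  have hUnit : IsUnit (2 - Xt - Yt) := by
    rw [hA, Matrix.isUnit_iff_isUnit_det, Matrix.det_fin_two_of, isUnit_iff_ne_zero]
    simpa using mul_ne_zero hne1 hne2
  have hEntryL : ((2 - Xt - Yt)⁻¹ * ((1 - Xt) * (1 - Yt))) 0 1 = -(((c^3 / s : ℝ)) : ℂ) := by
    rw [hInv]
    simp [Xt, Yt, Matrix.mul_apply, Fin.sum_univ_two, Matrix.sub_apply, Matrix.one_apply,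
      Matrix.smul_apply, smul_eq_mul]
    rw [h2s]
    field_simp
    ring
  have hEntryR : (((1 - Xt) * (1 - Yt)) * (2 - Xt - Yt)⁻¹) 1 0 = (((c^3 / s : ℝ)) : ℂ) := by
    rw [hInv]
    simp [Xt, Yt, Matrix.mul_apply, Fin.sum_univ_two, Matrix.sub_apply, Matrix.one_apply,
      Matrix.smul_apply, smul_eq_mul]
    rw [h2s]
    field_simp
    ring
  refine ⟨opNorm_lt_one_of_sq hc2 hXsq, opNorm_lt_one_of_sq hc2 hYsq, hUnit, ?_, ?_⟩
  · calc M < c^3 / s := hMlt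
      _ ≤ |c^3 / s| := le_abs_self _
      _ = ‖((2 - Xt - Yt)⁻¹ * ((1 - Xt) * (1 - Yt))) 0 1‖ := by
          rw [hEntryL, norm_neg, Complex.norm_real, Real.norm_eq_abs]
      _ ≤ _ := entry_le_opNorm _ 0 1
  · calc M < c^3 / s := hMlt
      _ ≤ |c^3 / s| := le_abs_self _
      _ = ‖(((1 - Xt) * (1 - Yt)) * (2 - Xt - Yt)⁻¹) 1 0‖ := by
          rw [hEntryR, Complex.norm_real, Real.norm_eq_abs]
      _ ≤ _ := entry_le_opNorm _ 1 0

/-- **Unboundedness of the decoupled NC parallel sums on the NC bidisk.**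
Along `X_t = cos t·[[cos t, sin t],[sin t, −cos t]]`,
`Y_t = cos t·[[cos t, −sin t],[−sin t, −cos t]]`, the decoupled parallel sums
`(2I − X_t − Y_t)⁻¹(I − X_t)(I − Y_t)` and `(I − X_t)(I − Y_t)(2I − X_t − Y_t)⁻¹`
blow up: for every `M > 0` there is `t ∈ (0, π/2)` with `‖X_t‖ < 1`, `‖Y_t‖ < 1`,
`2I − X_t − Y_t` invertible, and both norms exceeding `M`. -/
theorem decoupled_parallel_sums_unbounded :
    ∀ M : ℝ, 0 < M → ∃ t : ℝ, 0 < t ∧ t < Real.pi / 2 ∧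
      (let Xt : Matrix (Fin 2) (Fin 2) ℂ :=
        ((Real.cos t : ℝ) : ℂ) •
          !![((Real.cos t : ℝ) : ℂ), ((Real.sin t : ℝ) : ℂ);
             ((Real.sin t : ℝ) : ℂ), -((Real.cos t : ℝ) : ℂ)]
      let Yt : Matrix (Fin 2) (Fin 2) ℂ :=
        ((Real.cos t : ℝ) : ℂ) •
          !![((Real.cos t : ℝ) : ℂ), -((Real.sin t : ℝ) : ℂ);
             -((Real.sin t : ℝ) : ℂ), -((Real.cos t : ℝ) : ℂ)]
      opNorm Xt < 1 ∧ opNorm Yt < 1 ∧ IsUnit (2 - Xt - Yt) ∧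
        M < opNorm ((2 - Xt - Yt)⁻¹ * ((1 - Xt) * (1 - Yt))) ∧
        M < opNorm ((1 - Xt) * (1 - Yt) * (2 - Xt - Yt)⁻¹)) := by
  intro M hM
  have hpi := Real.pi_pos
  set t : ℝ := min (Real.pi / 6) (1 / (4 * M)) with ht
  have ht0 : 0 < t := lt_min (by positivity) (by positivity)
  have ht6 : t ≤ Real.pi / 6 := min_le_left _ _
  have htlt : t < Real.pi / 2 := lt_of_le_of_lt ht6 (by linarith)
  have hs0 : 0 < Real.sin t := Real.sin_pos_of_pos_of_lt_pi ht0 (by linarith)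
  have hpy : Real.sin t ^ 2 + Real.cos t ^ 2 = 1 := Real.sin_sq_add_cos_sq t
  have hc2 : Real.cos t ^ 2 < 1 := by nlinarith
  have hcge : Real.sqrt 3 / 2 ≤ Real.cos t := by
    rw [← Real.cos_pi_div_six]
    exact Real.cos_le_cos_of_nonneg_of_le_pi ht0.le (by linarith) ht6
  have hc14 : (1:ℝ)/4 < Real.cos t ^ 3 := by
    have h3 : Real.sqrt 3 ^ 2 = 3 := Real.sq_sqrt (by norm_num)
    have h3n : (0:ℝ) ≤ Real.sqrt 3 := Real.sqrt_nonneg 3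
    have hc85 : (0.85:ℝ) ≤ Real.cos t := by nlinarith [sq_nonneg (Real.sqrt 3 - 1.7)]
    have := pow_le_pow_left₀ (by norm_num : (0:ℝ) ≤ 0.85) hc85 3
    nlinarith [this]
  have hst : Real.sin t < 1 / (4 * M) :=
    lt_of_lt_of_le (Real.sin_lt ht0) (min_le_right _ _)
  have hMlt : M < Real.cos t ^ 3 / Real.sin t := by
    rw [lt_div_iff₀ hs0]
    have h4M : 0 < 4 * M := by positivity
    have h1 : Real.sin t * (4 * M) < 1 := (lt_div_iff₀ h4M).mp hst
    nlinarith [hc14, hs0]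
  exact ⟨t, ht0, htlt, aux_main M (Real.cos t) (Real.sin t) hs0 hpy hc2 hMlt⟩
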